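/- For every natural number n ≥ 1 and complex number a, ∑_{k=0}^{n} (-n)_k (a)_k 2^k / ((-2n+1)_k k!) = (2^{2n-1} (n-1)! / (2n-1)!) · ((a/2 + 1/2)_n + (a/2)_n). -/

import Mathlib

open Finset

/-- The Pochhammer symbol (rising factorial) `(x)_k = x (x+1) ⋯ (x+k-1)`. -/
noncomputable def poch (x : ℂ) (k : ℕ) : ℂ := (ascPochhammer ℂ k).eval x

lemma poch_zero (x : ℂ) : poch x 0 = 1 := by simp [poch]

lemma poch_succ (x : ℂ) (k : ℕ) : poch x (k+1) = poch x k * (x + k) := by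
  simp [poch, ascPochhammer_succ_eval]

lemma poch_succ_left (x : ℂ) (k : ℕ) : poch x (k+1) = x * poch (x+1) k := by
  simp [poch, ascPochhammer_succ_left, Polynomial.eval_comp]

lemma poch_eq_prod (x : ℂ) (n : ℕ) : poch x n = ∏ i ∈ range n, (x + i) := by
  induction n with
  | zero => simp [poch_zero]
  | succ n ih => rw [poch_succ, ih, Finset.prod_range_succ]

lemma poch_neg_mul (m k : ℕ) (hk : k ≤ m) :
    poch (-(m:ℂ)) k * ((m-k).factorial : ℂ) = (-1)^k * (m.factorial : ℂ) := by
  induction k with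
  | zero => simp [poch_zero]
  | succ k ih =>
    have hk' : k ≤ m := Nat.le_of_succ_le hk
    have h1 : m - k = (m - (k+1)) + 1 := by omega
    have h2 : ((m - (k+1) : ℕ) : ℂ) = (m : ℂ) - (k+1) := by
      rw [Nat.cast_sub hk]; push_cast; ring
    have := ih hk'
    rw [h1, Nat.factorial_succ] at this
    push_cast at this
    rw [h2] at this
    rw [poch_succ]
    linear_combination -this

lemma kfac_ne (k : ℕ) : ((k.factorial : ℂ)) ≠ 0 := Nat.cast_ne_zero.mpr (Nat.factorial_ne_zero _)

lemma lemO (n : ℕ) (a : ℂ) :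
    (n.factorial : ℂ) * ∑ k ∈ range (n+1), ((2*n-k).choose n : ℂ) * 2^k * poch a k / (k.factorial : ℂ)
      = 2^n * ∏ i ∈ range n, (a + 2*i + 1) := by
  induction n with
  | zero => simp [poch_zero]
  | succ n ih =>
    -- key recurrence
    have key : ((n:ℂ)+1) * ∑ k ∈ range (n+2), ((2*(n+1)-k).choose (n+1) : ℂ) * 2^k * poch a k / (k.factorial : ℂ)
        = 2*(a+2*n+1) * ∑ k ∈ range (n+1), ((2*n-k).choose n : ℂ) * 2^k * poch a k / (k.factorial : ℂ) := by
      -- sum1 : the shifted sum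
      have sum1 : (∑ k ∈ range (n+2), ((k:ℂ) * ((2*n+1-k).choose n : ℂ)) * 2^k * poch a k / (k.factorial : ℂ))
          = ∑ k ∈ range (n+1), ((2*n-k).choose n : ℂ) * 2^(k+1) * poch a (k+1) / (k.factorial : ℂ) := by
        rw [Finset.sum_range_succ' (fun k => ((k:ℂ) * ((2*n+1-k).choose n : ℂ)) * 2^k * poch a k / (k.factorial : ℂ)) (n+1)]
        simp only [Nat.cast_zero, zero_mul, mul_zero, zero_div, add_zero]
        apply Finset.sum_congr rfl
        intro k hk
        have h1 : 2*n+1-(k+1) = 2*n-k := by omega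
        rw [h1, Nat.factorial_succ]
        push_cast
        have hne : ((k:ℂ)+1) ≠ 0 := Nat.cast_add_one_ne_zero k
        rw [div_eq_div_iff (mul_ne_zero hne (kfac_ne k)) (kfac_ne k)]
        ring
      -- sum2 : the weighted sum
      have sum2 : (∑ k ∈ range (n+2), (((n:ℂ)+1) * ((2*n+1-k).choose (n+1) : ℂ)) * 2^(k+1) * poch a k / (k.factorial : ℂ))
          = ∑ k ∈ range (n+1), (((2*n+1-k : ℕ) : ℂ) * ((2*n-k).choose n : ℂ)) * 2^(k+1) * poch a k / (k.factorial : ℂ) := by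
        rw [Finset.sum_range_succ]
        have hz : (2*n+1-(n+1)).choose (n+1) = 0 := by
          apply Nat.choose_eq_zero_of_lt; omega
        rw [hz]
        simp only [Nat.cast_zero, mul_zero, zero_mul, zero_div, add_zero]
        apply Finset.sum_congr rfl
        intro k hk
        have hkn : k ≤ n := by simpa [Nat.lt_succ_iff] using hk
        have hid : (2*n+1-k) * ((2*n-k).choose n) = (n+1) * ((2*n+1-k).choose (n+1)) := by
          have h1 : 2*n+1-k = (2*n-k)+1 := by omega
          rw [h1, mul_comm (n+1)]
          exact (Nat.add_one_mul_choose_eq (2*n-k) n).symm ▸ rfl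
        have : ((2*n+1-k : ℕ) : ℂ) * ((2*n-k).choose n : ℂ) = ((n:ℂ)+1) * ((2*n+1-k).choose (n+1) : ℂ) := by
          exact_mod_cast congrArg (Nat.cast : ℕ → ℂ) hid
        rw [this]
      -- per-term identity on the LHS
      have lhs_eq : ((n:ℂ)+1) * ∑ k ∈ range (n+2), ((2*(n+1)-k).choose (n+1) : ℂ) * 2^k * poch a k / (k.factorial : ℂ)
          = (∑ k ∈ range (n+2), ((k:ℂ) * ((2*n+1-k).choose n : ℂ)) * 2^k * poch a k / (k.factorial : ℂ))
            + (∑ k ∈ range (n+2), (((n:ℂ)+1) * ((2*n+1-k).choose (n+1) : ℂ)) * 2^(k+1) * poch a k / (k.factorial : ℂ)) := by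
        rw [Finset.mul_sum, ← Finset.sum_add_distrib]
        apply Finset.sum_congr rfl
        intro k hk
        have hk' : k ≤ n+1 := by simpa [Nat.lt_succ_iff] using hk
        have hid : (n+1) * ((2*(n+1)-k).choose (n+1)) = k * ((2*n+1-k).choose n) + 2*(n+1) * ((2*n+1-k).choose (n+1)) := by
          have h1 : 2*(n+1)-k = (2*n+1-k)+1 := by omega
          rw [h1]
          have pascal : ((2*n+1-k)+1).choose (n+1) = (2*n+1-k).choose n + (2*n+1-k).choose (n+1) :=
            Nat.choose_succ_succ _ _
          rw [pascal]
          have hs : (2*n+1-k).choose (n+1) * (n+1) = (2*n+1-k).choose n * ((2*n+1-k) - n) :=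
            Nat.choose_succ_right_eq _ _
          have h2 : (2*n+1-k) - n = n+1-k := by omega
          rw [h2] at hs
          have h3 : k + (n+1-k) = n+1 := by omega
          nlinarith [hs, h3]
        have hidC : ((n:ℂ)+1) * ((2*(n+1)-k).choose (n+1) : ℂ)
            = (k:ℂ) * ((2*n+1-k).choose n : ℂ) + 2*((n:ℂ)+1) * ((2*n+1-k).choose (n+1) : ℂ) := by
          exact_mod_cast congrArg (Nat.cast : ℕ → ℂ) hid
        rw [← add_div, ← mul_div_assoc]
        congr 1
        linear_combination (2:ℂ)^k * poch a k * hidC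
      rw [lhs_eq, sum1, sum2]
      rw [Finset.mul_sum, ← Finset.sum_add_distrib]
      apply Finset.sum_congr rfl
      intro k hk
      have hk' : k ≤ n := by simpa [Nat.lt_succ_iff] using hk
      have hc : ((2*n+1-k : ℕ) : ℂ) = 2*(n:ℂ)+1-k := by
        rw [Nat.cast_sub (by omega)]; push_cast; ring
      rw [poch_succ, hc]
      field_simp
      ring
    rw [Finset.prod_range_succ]
    have hfac : (((n+1).factorial : ℕ) : ℂ) = ((n:ℂ)+1) * (n.factorial : ℂ) := by
      rw [Nat.factorial_succ]; push_cast; ring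
    calc ((n+1).factorial : ℂ) * ∑ k ∈ range (n+1+1), ((2*(n+1)-k).choose (n+1) : ℂ) * 2^k * poch a k / (k.factorial : ℂ)
        = (n.factorial : ℂ) * (((n:ℂ)+1) * ∑ k ∈ range (n+2), ((2*(n+1)-k).choose (n+1) : ℂ) * 2^k * poch a k / (k.factorial : ℂ)) := by
          rw [hfac]; ring
      _ = (n.factorial : ℂ) * (2*(a+2*n+1) * ∑ k ∈ range (n+1), ((2*n-k).choose n : ℂ) * 2^k * poch a k / (k.factorial : ℂ)) := by rw [key]
      _ = 2*(a+2*(n:ℂ)+1) * ((n.factorial : ℂ) * ∑ k ∈ range (n+1), ((2*n-k).choose n : ℂ) * 2^k * poch a k / (k.factorial : ℂ)) := by ring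
      _ = 2*(a+2*(n:ℂ)+1) * (2^n * ∏ i ∈ range n, (a + 2*i + 1)) := by rw [ih]
      _ = 2 ^ (n+1) * ((∏ i ∈ range n, (a + 2 * (i:ℂ) + 1)) * (a + 2 * (n:ℂ) + 1)) := by ring

lemma lemMain (m : ℕ) (a : ℂ) :
    2 * (((m+1).factorial : ℕ) : ℂ) * ∑ k ∈ range (m+2), ((2*m+1-k).choose m : ℂ) * 2^k * poch a k / (k.factorial : ℂ)
      = 2^(m+1) * (∏ i ∈ range (m+1), (a + 2*i) + ∏ i ∈ range (m+1), (a + 2*i + 1)) := by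
  -- odd part: 2^(m+1) * O_{m+1} = (m+1)! * T_{m+1}
  have odd := lemO (m+1) a
  -- even part: E_{m+1} = a * O_m(a+1);  2^m * O_m(a+1) = m! * T_m(a+1)
  have even0 := lemO m (a+1)
  have evenProd : (∏ i ∈ range (m+1), (a + 2*i)) = a * ∏ i ∈ range m, ((a+1) + 2*i + 1) := by
    rw [Finset.prod_range_succ']
    have : ∀ i ∈ range m, (a + 2*((i+1 : ℕ):ℂ)) = ((a+1) + 2*i + 1) := by
      intro i _; push_cast; ring
    rw [Finset.prod_congr rfl this]
    push_cast
    ring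
  have even : 2^(m+1) * (∏ i ∈ range (m+1), (a + 2*i))
      = ∑ k ∈ range (m+2), ((m.factorial : ℕ) : ℂ) * ((k:ℂ) * ((2*m+1-k).choose m : ℂ)) * 2^k * poch a k / (k.factorial : ℂ) := by
    rw [Finset.sum_range_succ' (fun k => ((m.factorial : ℕ) : ℂ) * ((k:ℂ) * ((2*m+1-k).choose m : ℂ)) * 2^k * poch a k / (k.factorial : ℂ)) (m+1)]
    simp only [Nat.cast_zero, zero_mul, mul_zero, zero_div, add_zero]
    have step : ∀ k ∈ range (m+1),
        ((m.factorial : ℕ) : ℂ) * (((k+1 : ℕ):ℂ) * ((2*m+1-(k+1)).choose m : ℂ)) * 2^(k+1) * poch a (k+1) / (((k+1).factorial : ℕ) : ℂ)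
          = a * (2 * (((m.factorial : ℕ) : ℂ) * (((2*m-k).choose m : ℂ) * 2^k * poch (a+1) k / (k.factorial : ℂ)))) := by
      intro k hk
      have h1 : 2*m+1-(k+1) = 2*m-k := by omega
      have hfacc : (((k+1).factorial : ℕ) : ℂ) = ((k:ℂ)+1) * (k.factorial : ℂ) := by
        rw [Nat.factorial_succ]; push_cast; ring
      rw [h1, hfacc, poch_succ_left]
      have hne : ((k:ℂ)+1) ≠ 0 := Nat.cast_add_one_ne_zero k
      push_cast
      rw [div_eq_iff (mul_ne_zero hne (kfac_ne k))]
      field_simp [kfac_ne k]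
      ring
    rw [Finset.sum_congr rfl step, ← Finset.mul_sum, ← Finset.mul_sum, ← Finset.mul_sum, even0, evenProd]
    ring
  -- now combine
  rw [mul_add, even, ← odd]
  have h2 : m+1+1 = m+2 := rfl
  simp only [h2]
  rw [Finset.mul_sum, Finset.mul_sum, ← Finset.sum_add_distrib]
  apply Finset.sum_congr rfl
  intro k hk
  have hk' : k ≤ m+1 := by simpa [Nat.lt_succ_iff] using hk
  have hid : (2*(m+1)-k) * ((2*m+1-k).choose m) = (m+1) * ((2*(m+1)-k).choose (m+1)) := by
    have h1 : 2*(m+1)-k = (2*m+1-k)+1 := by omega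
    rw [h1, mul_comm (m+1)]
    exact (Nat.add_one_mul_choose_eq (2*m+1-k) m).symm ▸ rfl
  have hidC : (2*((m:ℂ)+1)-k) * ((2*m+1-k).choose m : ℂ) = ((m:ℂ)+1) * ((2*(m+1)-k).choose (m+1) : ℂ) := by
    have hc : ((2*(m+1)-k : ℕ) : ℂ) = 2*((m:ℂ)+1)-k := by
      rw [Nat.cast_sub (by omega)]; push_cast; ring
    calc (2*((m:ℂ)+1)-k) * ((2*m+1-k).choose m : ℂ)
        = ((2*(m+1)-k : ℕ) : ℂ) * (((2*m+1-k).choose m : ℕ) : ℂ) := by rw [hc]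
      _ = (((2*(m+1)-k) * ((2*m+1-k).choose m) : ℕ) : ℂ) := by push_cast; ring
      _ = (((m+1) * ((2*(m+1)-k).choose (m+1)) : ℕ) : ℂ) := by rw [hid]
      _ = ((m:ℂ)+1) * ((2*(m+1)-k).choose (m+1) : ℂ) := by push_cast; ring
  have hfac : (((m+1).factorial : ℕ) : ℂ) = ((m:ℂ)+1) * ((m.factorial : ℕ) : ℂ) := by
    rw [Nat.factorial_succ]; push_cast; ring
  rw [hfac]
  linear_combination ((m.factorial : ℕ) : ℂ) * 2^k * poch a k / ((k.factorial : ℕ) : ℂ) * hidC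

theorem twoF1_negn_a_neg2nP1 (n : ℕ) (hn : 1 ≤ n) (a : ℂ) :
    ∑ k ∈ range (n + 1),
        poch (-(n : ℂ)) k * poch a k * 2 ^ k /
          (poch (-(2 * n : ℂ) + 1) k * (k.factorial : ℂ))
      = (2 : ℂ) ^ (2 * n - 1) * ((n - 1).factorial : ℂ) / (((2 * n - 1).factorial : ℂ)) *
          (poch (a / 2 + 1 / 2) n + poch (a / 2) n) := by
  obtain ⟨m, rfl⟩ : ∃ m, n = m+1 := ⟨n-1, by omega⟩
  rw [show (-(2 * ((m+1 : ℕ) : ℂ)) + 1) = -((2*m+1 : ℕ) : ℂ) by push_cast; ring]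
  rw [show 2*(m+1)-1 = 2*m+1 from by omega, show (m+1)-1 = m from by omega]
  -- rewrite each term of the LHS
  have hterm : ∀ k ∈ range (m+2),
      poch (-((m+1 : ℕ) : ℂ)) k * poch a k * 2 ^ k / (poch (-((2*m+1 : ℕ) : ℂ)) k * (k.factorial : ℂ))
        = (((m+1).factorial : ℂ) * (m.factorial : ℂ) / (((2*m+1).factorial : ℂ)))
            * (((2*m+1-k).choose m : ℂ) * 2^k * poch a k / (k.factorial : ℂ)) := by
    intro k hk
    have hk1 : k ≤ m+1 := by simpa [Nat.lt_succ_iff] using hk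
    have hk2 : k ≤ 2*m+1 := by omega
    have e1 := poch_neg_mul (m+1) k hk1
    have e2 := poch_neg_mul (2*m+1) k hk2
    have hA : (((m+1-k).factorial : ℕ) : ℂ) ≠ 0 := kfac_ne _
    have hB : (((2*m+1-k).factorial : ℕ) : ℂ) ≠ 0 := kfac_ne _
    have hP1 : poch (-((m+1 : ℕ) : ℂ)) k = (-1)^k * (((m+1).factorial : ℕ) : ℂ) / (((m+1-k).factorial : ℕ) : ℂ) := by
      rw [eq_div_iff hA]; exact e1
    have hP2 : poch (-((2*m+1 : ℕ) : ℂ)) k = (-1)^k * (((2*m+1).factorial : ℕ) : ℂ) / (((2*m+1-k).factorial : ℕ) : ℂ) := by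
      rw [eq_div_iff hB]; exact e2
    have e3 : ((2*m+1-k).choose m) * m.factorial * (m+1-k).factorial = (2*m+1-k).factorial := by
      have h := Nat.choose_mul_factorial_mul_factorial (show m ≤ 2*m+1-k by omega)
      rw [show 2*m+1-k-m = m+1-k from by omega] at h
      exact h
    have e3c : (((2*m+1-k).choose m : ℕ) : ℂ) * ((m.factorial : ℕ) : ℂ) * (((m+1-k).factorial : ℕ) : ℂ)
        = (((2*m+1-k).factorial : ℕ) : ℂ) := by exact_mod_cast congrArg (Nat.cast : ℕ → ℂ) e3
    rw [hP1, hP2]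
    have hs : ((-1 : ℂ))^k ≠ 0 := pow_ne_zero _ (by norm_num)
    have hf1 : (((m+1).factorial : ℕ) : ℂ) ≠ 0 := kfac_ne _
    have hf2 : (((2*m+1).factorial : ℕ) : ℂ) ≠ 0 := kfac_ne _
    have hfk : ((k.factorial : ℕ) : ℂ) ≠ 0 := kfac_ne _
    field_simp
    linear_combination (-poch a k) * e3c
  rw [Finset.sum_congr rfl hterm, ← Finset.mul_sum]
  -- use lemMain
  have main := lemMain m a
  have hE : (2:ℂ)^(m+1) * poch (a/2) (m+1) = ∏ i ∈ range (m+1), (a + 2*i) := by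
    rw [poch_eq_prod, show ((2:ℂ)^(m+1)) = ∏ _i ∈ range (m+1), (2:ℂ) from by
      rw [Finset.prod_const, Finset.card_range], ← Finset.prod_mul_distrib]
    exact Finset.prod_congr rfl (fun i _ => by ring)
  have hO : (2:ℂ)^(m+1) * poch (a/2 + 1/2) (m+1) = ∏ i ∈ range (m+1), (a + 2*i + 1) := by
    rw [poch_eq_prod, show ((2:ℂ)^(m+1)) = ∏ _i ∈ range (m+1), (2:ℂ) from by
      rw [Finset.prod_const, Finset.card_range], ← Finset.prod_mul_distrib]
    exact Finset.prod_congr rfl (fun i _ => by ring)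
  rw [← hE, ← hO] at main
  have hf1 : (((m+1).factorial : ℕ) : ℂ) ≠ 0 := kfac_ne _
  have hf2 : (((2*m+1).factorial : ℕ) : ℂ) ≠ 0 := kfac_ne _
  have h2 : ((2:ℂ)^(m+1)) ≠ 0 := pow_ne_zero _ two_ne_zero
  -- conclude
  have hS : (∑ k ∈ range (m+2), ((2*m+1-k).choose m : ℂ) * 2^k * poch a k / (k.factorial : ℂ))
      = 2^(m+1) * (2^(m+1) * poch (a/2) (m+1) + 2^(m+1) * poch (a/2 + 1/2) (m+1)) / (2 * ((m+1).factorial : ℂ)) := by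
    rw [eq_div_iff (by exact mul_ne_zero two_ne_zero hf1)]
    linear_combination main
  rw [hS]
  have hexp : (2:ℂ)^(2*m+1) = 2^(m+1) * 2^(m+1) / 2 := by
    rw [← pow_add]; rw [show (m+1)+(m+1) = (2*m+1)+1 from by ring, pow_succ]
    field_simp
    ring
  rw [hexp]
  field_simp
  ring
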